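/- Let y : Fin k → ℝ be nondecreasing, let γ : Fin k → ℝ be nonnegative, and suppose y 0 ≥ ∑_{i<k} γ i. Then ∏_{i<k} (y i - γ i) ≥ (y 0 - ∑_{i<k} γ i) · ∏_{1≤i<k} y i. -/

import Mathlib

lemma prod_erase_zero' {n : ℕ} (f : Fin (n + 1) → ℝ) :
    ∏ i ∈ Finset.univ.erase 0, f i = ∏ i : Fin n, f i.succ := by
  have himg : (Finset.univ.erase (0 : Fin (n+1))) = Finset.univ.image Fin.succ := by
    ext i
    simp [Fin.exists_succ_eq, eq_comm]
  rw [himg, Finset.prod_image (fun a _ b _ h => Fin.succ_injective _ h)]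

theorem stmt3 (m : ℕ) (y γ : Fin (m + 1) → ℝ) (hy : Monotone y)
    (hγ : ∀ i, 0 ≤ γ i) (h0 : y 0 ≥ ∑ i, γ i) :
    ∏ i, (y i - γ i) ≥ (y 0 - ∑ i, γ i) * ∏ i ∈ Finset.univ.erase 0, y i := by
  induction m with
  | zero => simp
  | succ n ih =>
    set L : Fin (n + 2) := Fin.last (n + 1) with hL
    have hγsum : (0:ℝ) ≤ ∑ i, γ i := Finset.sum_nonneg fun i _ => hγ i
    have hy0 : (0:ℝ) ≤ y 0 := le_trans hγsum h0
    have hyi : ∀ i, 0 ≤ y i := fun i => le_trans hy0 (hy (Fin.zero_le i))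
    have hγL : γ L ≤ ∑ i, γ i := Finset.single_le_sum (fun i _ => hγ i) (Finset.mem_univ L)
    have hsum : ∑ i, γ i = (∑ i : Fin (n+1), γ i.castSucc) + γ L := Fin.sum_univ_castSucc γ
    have h0' : (y ∘ Fin.castSucc) 0 ≥ ∑ i, (γ ∘ Fin.castSucc) i := by
      simp only [Function.comp, Fin.castSucc_zero]
      have : (∑ i : Fin (n+1), γ i.castSucc) ≤ ∑ i, γ i := by
        rw [hsum]; linarith [hγ L]
      exact le_trans this h0
    have IH := ih (y ∘ Fin.castSucc) (γ ∘ Fin.castSucc)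
      (hy.comp Fin.strictMono_castSucc.monotone) (fun i => hγ _) h0'
    -- rewrite LHS
    rw [Fin.prod_univ_castSucc (fun i => y i - γ i)]
    -- rewrite RHS product over erase 0
    have hRHS : ∏ i ∈ Finset.univ.erase 0, y i
        = (∏ i ∈ Finset.univ.erase 0, (y ∘ Fin.castSucc) i) * y L := by
      rw [prod_erase_zero' y, prod_erase_zero' (y ∘ Fin.castSucc),
        Fin.prod_univ_castSucc (fun i : Fin (n+1) => y i.succ)]
      simp [Function.comp, Fin.succ_castSucc, hL, Fin.succ_last, -Fin.castSucc_succ]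
    rw [hRHS]
    have hprodnn : 0 ≤ ∏ i ∈ Finset.univ.erase 0, (y ∘ Fin.castSucc) i :=
      Finset.prod_nonneg fun i _ => hyi _
    have hLfac : y L - γ L ≥ y 0 - ∑ i, γ i := by
      have := hy (Fin.zero_le L); linarith
    have hLnn : (0:ℝ) ≤ y L - γ L := le_trans (by linarith) hLfac
    have step1 : ∏ i : Fin (n+1), (y i.castSucc - γ i.castSucc)
        ≥ ((y ∘ Fin.castSucc) 0 - ∑ i, (γ ∘ Fin.castSucc) i) *
          ∏ i ∈ Finset.univ.erase 0, (y ∘ Fin.castSucc) i := IH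
    have key : ((y ∘ Fin.castSucc) 0 - ∑ i, (γ ∘ Fin.castSucc) i) * (y L - γ L)
        ≥ (y 0 - ∑ i, γ i) * y L := by
      simp only [Function.comp, Fin.castSucc_zero]
      have h1 : y 0 ≤ y L := hy (Fin.zero_le L)
      have h2 : (0:ℝ) ≤ ∑ i : Fin (n+1), γ i.castSucc :=
        Finset.sum_nonneg fun i _ => hγ _
      nlinarith [hγ L]
    calc (∏ i : Fin (n+1), (y i.castSucc - γ i.castSucc)) * (y L - γ L)
        ≥ (((y ∘ Fin.castSucc) 0 - ∑ i, (γ ∘ Fin.castSucc) i) *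
            ∏ i ∈ Finset.univ.erase 0, (y ∘ Fin.castSucc) i) * (y L - γ L) :=
          mul_le_mul_of_nonneg_right step1 hLnn
      _ = (((y ∘ Fin.castSucc) 0 - ∑ i, (γ ∘ Fin.castSucc) i) * (y L - γ L)) *
            ∏ i ∈ Finset.univ.erase 0, (y ∘ Fin.castSucc) i := by ring
      _ ≥ ((y 0 - ∑ i, γ i) * y L) * ∏ i ∈ Finset.univ.erase 0, (y ∘ Fin.castSucc) i :=
          mul_le_mul_of_nonneg_right key hprodnn
      _ = (y 0 - ∑ i, γ i) * ((∏ i ∈ Finset.univ.erase 0, (y ∘ Fin.castSucc) i) * y L) := by ring
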